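/- If E is conserved, T_r(t) ≤ T_r^M for all t, E - T_r^M > 0, and T(t) ≥ T_r(t) ≥ 0, then I_p'' (t) = 2(T(t) - T_r(t)) + 2(E - T_r(t)) is bounded below by the positive constant 2(E - T_r^M), and hence I_p → ∞, so the motion cannot be bounded. -/

import Mathlib

open Filter

/-- Sufficiency condition for escape: if the conserved energy exceeds the uniform
upper bound on the rotational kinetic energy, the Lagrange–Jacobi identity bounds
`I_p''` below by the positive constant `2 (E - T_rᴹ)`, so `I_p → ∞` and the motion
cannot be bounded. -/
theorem escape_sufficiency
    (Ip T Tr : ℝ → ℝ) (E TrM t0 : ℝ)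
    (hTrM : ∀ t, Tr t ≤ TrM)
    (hE : 0 < E - TrM)
    (hT : ∀ t, Tr t ≤ T t)
    (hTr : ∀ t, 0 ≤ Tr t)
    (hLJ : ∀ t, deriv (deriv Ip) t = 2 * (T t - Tr t) + 2 * (E - Tr t))
    (hdiff : ∀ t, t0 ≤ t → DifferentiableAt ℝ Ip t)
    (hdiff' : ∀ t, t0 ≤ t → DifferentiableAt ℝ (deriv Ip) t)
    (hpos : ∀ t, t0 ≤ t → 0 < Ip t) :
    (∀ t, 2 * (E - TrM) ≤ deriv (deriv Ip) t) ∧ Tendsto Ip atTop atTop := by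
  set c : ℝ := 2 * (E - TrM) with hc
  have hcpos : 0 < c := by positivity
  have hbound : ∀ t, c ≤ deriv (deriv Ip) t := by
    intro t
    rw [hLJ t]
    have h1 := hTrM t
    have h2 := hT t
    linarith
  refine ⟨hbound, ?_⟩
  have key : ∀ t, t0 ≤ t → c * (t - t0) ≤ deriv Ip t - deriv Ip t0 := by
    intro t ht
    exact (convex_Ici t0).mul_sub_le_image_sub_of_le_deriv
      (fun x hx => (hdiff' x hx).continuousAt.continuousWithinAt)
      (fun x hx => ((hdiff' x (le_of_lt (by simpa using hx))).differentiableWithinAt))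
      (fun x hx => hbound x) t0 (Set.mem_Ici.2 le_rfl) t ht ht
  set t1 : ℝ := max t0 (t0 + (1 - deriv Ip t0) / c) with ht1
  have ht01 : t0 ≤ t1 := le_max_left _ _
  have hderiv1 : ∀ t, t1 ≤ t → (1 : ℝ) ≤ deriv Ip t := by
    intro t ht
    have ht0 : t0 ≤ t := le_trans ht01 ht
    have h := key t ht0
    have h2 : t0 + (1 - deriv Ip t0) / c ≤ t := le_trans (le_max_right _ _) ht
    have h3 : (1 - deriv Ip t0) / c ≤ t - t0 := by linarith
    have h4 : 1 - deriv Ip t0 ≤ c * (t - t0) := by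
      rw [div_le_iff₀ hcpos] at h3; linarith [h3]
    linarith
  have key2 : ∀ t, t1 ≤ t → 1 * (t - t1) ≤ Ip t - Ip t1 := by
    intro t ht
    exact (convex_Ici t1).mul_sub_le_image_sub_of_le_deriv
      (fun x hx => (hdiff x (le_trans ht01 hx)).continuousAt.continuousWithinAt)
      (fun x hx => ((hdiff x (le_trans ht01 (le_of_lt (by simpa using hx)))).differentiableWithinAt))
      (fun x hx => hderiv1 x (le_of_lt (by simpa using hx)))
      t1 (Set.mem_Ici.2 le_rfl) t ht ht
  have hlin : Tendsto (fun t : ℝ => Ip t1 + (t - t1)) atTop atTop := by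
    apply tendsto_atTop_add_const_left
    simpa [sub_eq_add_neg] using tendsto_atTop_add_const_right atTop (-t1) tendsto_id
  refine tendsto_atTop_mono' atTop ?_ hlin
  filter_upwards [eventually_ge_atTop t1] with t ht
  have := key2 t ht
  linarith
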